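/- Suppose k, n, m are positive integers with k ≥ 150, n − m ≥ 2, a1, a2 ∈ {1,…,9}, and Q_k = a1·(10^n−1)/9 − a2·(10^m−1)/9. Then |9·10^{−n}·α^k/a1 − 1| ≤ 21/10^{n−m}, where α = 1 + √2. -/

import Mathlib

/-- The Pell-Lucas sequence: `Q 0 = Q 1 = 2`, `Q (n+2) = 2 * Q (n+1) + Q n`. -/
def pellLucas : ℕ → ℕ
  | 0 => 2
  | 1 => 2
  | n + 2 => 2 * pellLucas (n + 1) + pellLucas n

lemma pellLucas_real (k : ℕ) :
    (pellLucas k : ℝ) = (1 + Real.sqrt 2) ^ k + (1 - Real.sqrt 2) ^ k := by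
  have h2 : Real.sqrt 2 ^ 2 = 2 := Real.sq_sqrt (by norm_num)
  induction k using Nat.twoStepInduction with
  | zero => norm_num [pellLucas]
  | one => simp [pellLucas]; ring
  | more n ih1 ih2 =>
    show ((2 * pellLucas (n+1) + pellLucas n : ℕ) : ℝ) = _
    push_cast
    rw [ih1, ih2]
    linear_combination (-((1 + Real.sqrt 2)^n + (1 - Real.sqrt 2)^n)) * h2

/-- `|9 * 10^(-n) * α^k / a1 - 1| ≤ 21 / 10^(n-m)` with `α = 1 + √2`. -/
theorem pellLucas_linear_form_bound_one (k n m a1 a2 : ℕ) (hk : 150 ≤ k) (hnm : m + 2 ≤ n) (hm : 1 ≤ m)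
    (ha11 : 1 ≤ a1) (ha19 : a1 ≤ 9) (ha21 : 1 ≤ a2) (ha29 : a2 ≤ 9)
    (heq : (pellLucas k : ℤ) = (a1 : ℤ) * ((10 ^ n - 1) / 9) - (a2 : ℤ) * ((10 ^ m - 1) / 9)) :
    |9 * (10 : ℝ) ^ (-(n : ℤ)) * (1 + Real.sqrt 2) ^ k / (a1 : ℝ) - 1| ≤
      21 / 10 ^ (n - m) := by
  have hdvd : ∀ j : ℕ, (9 : ℤ) ∣ 10 ^ j - 1 := by
    intro j
    have := sub_dvd_pow_sub_pow (10 : ℤ) 1 j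
    simpa using this
  have hn9 : (9 : ℤ) * ((10 ^ n - 1) / 9) = 10 ^ n - 1 := Int.mul_ediv_cancel' (hdvd n)
  have hm9 : (9 : ℤ) * ((10 ^ m - 1) / 9) = 10 ^ m - 1 := Int.mul_ediv_cancel' (hdvd m)
  have hZ : 9 * (pellLucas k : ℤ) = (a1 : ℤ) * (10 ^ n - 1) - (a2 : ℤ) * (10 ^ m - 1) := by
    rw [heq]; linear_combination (a1:ℤ) * hn9 - (a2:ℤ) * hm9
  have hR : 9 * ((1 + Real.sqrt 2) ^ k + (1 - Real.sqrt 2) ^ k)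
      = (a1 : ℝ) * (10 ^ n - 1) - (a2 : ℝ) * (10 ^ m - 1) := by
    have := congrArg (fun z : ℤ => (z : ℝ)) hZ
    push_cast at this
    rw [← pellLucas_real]; push_cast; linarith
  have ha1 : (1 : ℝ) ≤ a1 := by exact_mod_cast ha11
  have ha1' : (a1 : ℝ) ≤ 9 := by exact_mod_cast ha19
  have ha2 : (1 : ℝ) ≤ a2 := by exact_mod_cast ha21
  have ha2' : (a2 : ℝ) ≤ 9 := by exact_mod_cast ha29
  have h10n : (0 : ℝ) < 10 ^ n := by positivity
  have hden : (0 : ℝ) < (a1 : ℝ) * 10 ^ n := by positivity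
  have hbeta : |(1 - Real.sqrt 2) ^ k| ≤ 1 := by
    rw [abs_pow]
    apply pow_le_one₀ (abs_nonneg _)
    rw [abs_le]
    constructor
    · nlinarith [Real.sq_sqrt (show (0:ℝ) ≤ 2 by norm_num), Real.sqrt_nonneg 2]
    · nlinarith [Real.sqrt_nonneg 2]
  have hbeta' : -1 ≤ (1 - Real.sqrt 2) ^ k ∧ (1 - Real.sqrt 2) ^ k ≤ 1 := abs_le.mp hbeta
  have hexpr : 9 * (10 : ℝ) ^ (-(n : ℤ)) * (1 + Real.sqrt 2) ^ k / (a1 : ℝ) - 1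
      = (-(a2 : ℝ) * 10 ^ m + a2 - a1 - 9 * (1 - Real.sqrt 2) ^ k) / ((a1 : ℝ) * 10 ^ n) := by
    rw [zpow_neg, zpow_natCast]
    field_simp
    linear_combination hR
  rw [hexpr, abs_div, abs_of_pos hden]
  have h10m : (10 : ℝ) ≤ 10 ^ m := by
    calc (10:ℝ) = 10 ^ 1 := (pow_one 10).symm
    _ ≤ 10 ^ m := pow_le_pow_right₀ (by norm_num) hm
  have hnum : |(-(a2 : ℝ) * 10 ^ m + a2 - a1 - 9 * (1 - Real.sqrt 2) ^ k)| ≤ 21 * 10 ^ m := by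
    rw [abs_le]
    constructor <;> nlinarith [hbeta'.1, hbeta'.2]
  have hpow : (10 : ℝ) ^ (n - m) * 10 ^ m = 10 ^ n := by
    rw [← pow_add]; congr 1; omega
  have hpos2 : (0 : ℝ) < 10 ^ (n - m) := by positivity
  rw [div_le_div_iff₀ hden hpos2]
  have h10m' : (0 : ℝ) < 10 ^ m := by positivity
  nlinarith [hnum, abs_nonneg (-(a2 : ℝ) * 10 ^ m + a2 - a1 - 9 * (1 - Real.sqrt 2) ^ k), hpow, mul_le_mul_of_nonneg_right hnum (le_of_lt hpos2)]
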